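/- For 1 ≤ i ≤ j < n, the subgroup of B_n generated by σᵢ, σ_{i+1}, …, σⱼ is isomorphic to the braid group B_{j−i+2}. -/

import Mathlib

/-- The braid relations on `n` strands, as elements of the free group on the
standard generators `σ₁, …, σ_{n-1}` (indexed by `Fin (n-1)`). -/
def braidRels (n : ℕ) : Set (FreeGroup (Fin (n - 1))) :=
  {r | (∃ i j : Fin (n - 1), (i : ℕ) + 1 < (j : ℕ) ∧
          r = FreeGroup.of i * FreeGroup.of j * (FreeGroup.of i)⁻¹ * (FreeGroup.of j)⁻¹) ∨
       (∃ i j : Fin (n - 1), (i : ℕ) + 1 = (j : ℕ) ∧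
          r = FreeGroup.of i * FreeGroup.of j * FreeGroup.of i *
              (FreeGroup.of j * FreeGroup.of i * FreeGroup.of j)⁻¹)}

/-- The Artin braid group on `n` strands. -/
def BraidGroup (n : ℕ) := PresentedGroup (braidRels n)

instance (n : ℕ) : Group (BraidGroup n) := by unfold BraidGroup; infer_instance

/-- The standard Artin generator `σ_{i+1}` (0-indexed by `i : Fin (n-1)`). -/
def σ {n : ℕ} (i : Fin (n - 1)) : BraidGroup n := PresentedGroup.of i

/-- The Garside half-twist `Δ = (σ₁)(σ₂σ₁)⋯(σ_{n-1}⋯σ₁)`. -/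
def halfTwist (n : ℕ) : BraidGroup n :=
  ((List.finRange (n - 1)).map (fun k =>
    ((((List.finRange (n - 1)).filter (· ≤ k)).reverse).map σ).prod)).prod


namespace BraidProof

/-- far-apart pair -/
def Far (x y : ℕ) : Prop := x + 2 ≤ y ∨ y + 2 ≤ x

/-- adjacent pair -/
def Adj (x y : ℕ) : Prop := y = x + 1 ∨ x = y + 1

instance (a b : ℕ) : Decidable (Adj a b) := by unfold Adj; infer_instance

lemma far_symm {x y : ℕ} (h : Far x y) : Far y x := h.elim Or.inr Or.inl
lemma adj_symm {x y : ℕ} (h : Adj x y) : Adj y x := h.elim Or.inr Or.inl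
lemma adj_decide {x y : ℕ} (h : Adj x y) : Adj x y := h

lemma trichotomy (x y : ℕ) : x = y ∨ Adj x y ∨ Far x y := by
  unfold Adj Far; omega

lemma far_not_adj {x y : ℕ} (h : Far x y) : ¬ Adj x y := by unfold Far Adj at *; omega
lemma far_ne {x y : ℕ} (h : Far x y) : x ≠ y := by unfold Far at h; omega
lemma adj_ne {x y : ℕ} (h : Adj x y) : x ≠ y := by unfold Adj at h; omega

/-- braid relation moves on words -/
inductive Brel : List ℕ → List ℕ → Prop
  | comm {x y : ℕ} : x + 2 ≤ y → Brel [x, y] [y, x]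
  | braid (x : ℕ) : Brel [x, x + 1, x] [x + 1, x, x + 1]

/-- congruence generated by braid moves -/
inductive R : List ℕ → List ℕ → Prop
  | of {x y} : Brel x y → R x y
  | refl (x) : R x x
  | symm {x y} : R x y → R y x
  | trans {x y z} : R x y → R y z → R x z
  | append {x y u v} : R x u → R y v → R (x ++ y) (u ++ v)

lemma R.cons (a : ℕ) {u v : List ℕ} (h : R u v) : R (a :: u) (a :: v) :=
  R.append (R.refl [a]) h

lemma R.consList (p : List ℕ) {u v : List ℕ} (h : R u v) : R (p ++ u) (p ++ v) :=
  R.append (R.refl p) h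

lemma R.appendRight (p : List ℕ) {u v : List ℕ} (h : R u v) : R (u ++ p) (v ++ p) :=
  R.append h (R.refl p)

/-- commutation with context -/
lemma R.commF {x y : ℕ} (h : Far x y) (p q : List ℕ) :
    R (p ++ x :: y :: q) (p ++ y :: x :: q) := by
  rcases h with h | h
  · exact R.consList p (R.append (R.of (Brel.comm h)) (R.refl q) :
      R ([x, y] ++ q) ([y, x] ++ q))
  · exact R.consList p (R.append (R.symm (R.of (Brel.comm h))) (R.refl q) :
      R ([x, y] ++ q) ([y, x] ++ q))

/-- braid with context -/
lemma R.braidF {x y : ℕ} (h : Adj x y) (p q : List ℕ) :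
    R (p ++ x :: y :: x :: q) (p ++ y :: x :: y :: q) := by
  rcases h with h | h
  · subst h
    exact R.consList p (R.append (R.of (Brel.braid x)) (R.refl q) :
      R ([x, x+1, x] ++ q) ([x+1, x, x+1] ++ q))
  · subst h
    exact R.consList p (R.append (R.symm (R.of (Brel.braid y))) (R.refl q) :
      R ([y+1, y, y+1] ++ q) ([y, y+1, y] ++ q))

lemma Brel.length {x y : List ℕ} (h : Brel x y) : x.length = y.length := by
  cases h <;> rfl

lemma R.length {x y : List ℕ} (h : R x y) : x.length = y.length := by
  induction h with
  | of h => exact h.length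
  | refl => rfl
  | symm _ ih => omega
  | trans _ _ ih1 ih2 => omega
  | append _ _ ih1 ih2 => simp [ih1, ih2]

/-- words mapped multiplicatively into a monoid, respecting the braid moves,
are `R`-invariant. -/
lemma R.hom {M : Type*} [Monoid M] (f : ℕ → M)
    (hf : ∀ {x y}, Brel x y → ((x.map f).prod = (y.map f).prod))
    {u v : List ℕ} (h : R u v) : ((u.map f).prod = (v.map f).prod) := by
  induction h with
  | of h => exact hf h
  | refl => rfl
  | symm _ ih => exact ih.symm
  | trans _ _ ih1 ih2 => exact ih1.trans ih2
  | append _ _ ih1 ih2 => simp only [List.map_append, List.prod_append, ih1, ih2]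

lemma Brel.rev {x y : List ℕ} (h : Brel x y) : R x.reverse y.reverse := by
  cases h with
  | comm h => exact R.symm (R.of (Brel.comm h))
  | braid x => exact R.of (Brel.braid x)

lemma R.rev {u v : List ℕ} (h : R u v) : R u.reverse v.reverse := by
  induction h with
  | of h => exact h.rev
  | refl => exact R.refl _
  | symm _ ih => exact R.symm ih
  | trans _ _ ih1 ih2 => exact R.trans ih1 ih2
  | append _ _ ih1 ih2 => simpa using R.append ih2 ih1

/-- all letters below a bound -/
def Bounded (N : ℕ) (w : List ℕ) : Prop := ∀ x ∈ w, x < N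

lemma Brel.bounded {N : ℕ} {x y : List ℕ} (h : Brel x y) :
    (Bounded N x ↔ Bounded N y) := by
  cases h with
  | comm h => unfold Bounded; simp; tauto
  | braid x => unfold Bounded; simp; tauto

lemma R.bounded {N : ℕ} {u v : List ℕ} (h : R u v) : Bounded N u ↔ Bounded N v := by
  induction h with
  | of h => exact h.bounded
  | refl => rfl
  | symm _ ih => exact ih.symm
  | trans _ _ ih1 ih2 => exact ih1.trans ih2
  | append _ _ ih1 ih2 =>
      unfold Bounded at *; simp only [List.mem_append] at *
      constructor <;> intro H <;> intro x hx <;> rcases hx with hx | hx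
      · exact (ih1.1 fun z hz => H z (Or.inl hz)) x hx
      · exact (ih2.1 fun z hz => H z (Or.inr hz)) x hx
      · exact (ih1.2 fun z hz => H z (Or.inl hz)) x hx
      · exact (ih2.2 fun z hz => H z (Or.inr hz)) x hx


/-- the complement word: `a * (cw a b)` is the lcm of `a` and `b` -/
def cw (a b : ℕ) : List ℕ :=
  if a = b then [] else if Adj a b then [b, a] else [b]

@[simp] lemma cw_self (a : ℕ) : cw a a = [] := by simp [cw]

lemma cw_adj {a b : ℕ} (h : Adj a b) : cw a b = [b, a] := by
  simp [cw, adj_ne h, h]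

lemma cw_far {a b : ℕ} (h : Far a b) : cw a b = [b] := by
  simp [cw, far_ne h, far_not_adj h]

notation:50 u " ≋ " v => R u v

instance : Trans R R R := ⟨R.trans⟩

/-- Statement of the key left-lcm lemma, for words of length at most `L`. -/
def KeyHyp (L : ℕ) : Prop := ∀ x y : List ℕ, R x y → x.length ≤ L →
  ∀ a u b v, x = a :: u → y = b :: v → ∃ w, (u ≋ cw a b ++ w) ∧ (v ≋ cw b a ++ w)

lemma keyCons {L : ℕ} (K : KeyHyp L) {a b : ℕ} {u v : List ℕ}
    (h : R (a :: u) (b :: v)) (hl : u.length + 1 ≤ L) :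
    ∃ w, (u ≋ cw a b ++ w) ∧ (v ≋ cw b a ++ w) :=
  K _ _ h (by simpa using hl) _ _ _ _ rfl rfl

lemma peel1 {L : ℕ} (K : KeyHyp L) {x : ℕ} {p q : List ℕ}
    (h : R (x :: p) (x :: q)) (hl : p.length + 1 ≤ L) : R p q := by
  obtain ⟨w, h1, h2⟩ := keyCons K h hl
  simp only [cw_self, List.nil_append] at h1 h2
  exact h1.trans h2.symm

lemma peelW {L : ℕ} (K : KeyHyp L) {d p q : List ℕ} (hd : d.length ≤ 2)
    (h : R (d ++ p) (d ++ q)) (hl : (d ++ p).length ≤ L) : R p q := by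
  match d, hd with
  | [], _ => exact h
  | [x], _ =>
      exact peel1 K h (by simpa using hl)
  | [x, y], _ =>
      have h1 : R (y :: p) (y :: q) := peel1 K h (by simp at hl ⊢; omega)
      exact peel1 K h1 (by simp at hl ⊢; omega)

lemma cube_ff {L : ℕ} (K : KeyHyp L) {e a b : ℕ} (hea : Far e a) (heb : Far e b)
    (hab : a ≠ b) {w₁ w₂ : List ℕ}
    (H : R (cw e a ++ w₁) (cw e b ++ w₂))
    (hL : (cw e a ++ w₁).length ≤ L) :
    ∃ w, (R (cw a e ++ w₁) (cw a b ++ w)) ∧ (R (cw b e ++ w₂) (cw b a ++ w)) := by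
  rw [cw_far hea, cw_far heb] at H
  have hw : w₁.length + 1 ≤ L := by
    rw [cw_far hea] at hL; simp at hL; omega
  obtain ⟨s, hs1, hs2⟩ := keyCons K (show R (a :: w₁) (b :: w₂) from H) hw
  rcases (trichotomy a b).resolve_left hab with hadj | hfar
  · rw [cw_adj hadj] at hs1; rw [cw_adj (adj_symm hadj)] at hs2
    refine ⟨e :: s, ?_, ?_⟩
    · rw [cw_far (far_symm hea), cw_adj hadj]
      calc (e::w₁) ≋ (e::b::a::s) := R.consList [e] hs1
        _ ≋ (b::e::a::s) := R.commF heb [] (a::s)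
        _ ≋ (b::a::e::s) := R.commF hea [b] s
    · rw [cw_far (far_symm heb), cw_adj (adj_symm hadj)]
      calc (e::w₂) ≋ (e::a::b::s) := R.consList [e] hs2
        _ ≋ (a::e::b::s) := R.commF hea [] (b::s)
        _ ≋ (a::b::e::s) := R.commF heb [a] s
  · rw [cw_far hfar] at hs1; rw [cw_far (far_symm hfar)] at hs2
    refine ⟨e :: s, ?_, ?_⟩
    · rw [cw_far (far_symm hea), cw_far hfar]
      calc (e::w₁) ≋ (e::b::s) := R.consList [e] hs1
        _ ≋ (b::e::s) := R.commF heb [] s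
    · rw [cw_far (far_symm heb), cw_far (far_symm hfar)]
      calc (e::w₂) ≋ (e::a::s) := R.consList [e] hs2
        _ ≋ (a::e::s) := R.commF hea [] s

lemma cube_af {L : ℕ} (K : KeyHyp L) {e a b : ℕ} (hea : Adj e a) (heb : Far e b)
    (hab : a ≠ b) {w₁ w₂ : List ℕ}
    (H : R (cw e a ++ w₁) (cw e b ++ w₂))
    (hL : (cw e a ++ w₁).length ≤ L) :
    ∃ w, (R (cw a e ++ w₁) (cw a b ++ w)) ∧ (R (cw b e ++ w₂) (cw b a ++ w)) := by
  rw [cw_adj hea, cw_far heb] at H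
  have hw : w₁.length + 2 ≤ L := by
    rw [cw_adj hea] at hL; simp at hL; omega
  obtain ⟨s, hs1, hs2⟩ := keyCons K (show R (a :: (e :: w₁)) (b :: w₂) from H) (by simp; omega)
  rcases (trichotomy a b).resolve_left hab with hadj | hfar
  · -- a b adjacent
    rw [cw_adj hadj] at hs1; rw [cw_adj (adj_symm hadj)] at hs2
    have hlens : s.length + 1 = w₁.length := by
      have := hs1.length; simp at this; omega
    obtain ⟨r₁, hr1, hr2⟩ :=
      keyCons K (show R (e :: w₁) (b :: (a :: s)) from hs1) (by omega)
    rw [cw_far heb] at hr1; rw [cw_far (far_symm heb)] at hr2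
    obtain ⟨r₂, ht1, ht2⟩ :=
      keyCons K (show R (a :: s) (e :: r₁) from hr2) (by omega)
    rw [cw_adj (adj_symm hea)] at ht1; rw [cw_adj hea] at ht2
    -- ht1 : R s ([e,a]++r₂), ht2 : R r₁ ([a,e]++r₂)
    refine ⟨e::a::b::r₂, ?_, ?_⟩
    · rw [cw_adj (adj_symm hea), cw_adj hadj]
      have hw₁ : R w₁ (b::a::e::r₂) := hr1.trans (R.consList [b] ht2)
      calc (e::a::w₁) ≋ (e::a::b::a::e::r₂) := R.consList [e,a] hw₁
        _ ≋ (e::b::a::b::e::r₂) := R.braidF hadj [e] (e::r₂)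
        _ ≋ (b::e::a::b::e::r₂) := R.commF heb [] (a::b::e::r₂)
        _ ≋ (b::e::a::e::b::r₂) := R.commF (far_symm heb) [b,e,a] r₂
        _ ≋ (b::a::e::a::b::r₂) := R.braidF hea [b] (b::r₂)
    · rw [cw_far (far_symm heb), cw_adj (adj_symm hadj)]
      have hw₂ : R w₂ (a::b::e::a::r₂) := hs2.trans (R.consList [a,b] ht1)
      calc (e::w₂) ≋ (e::a::b::e::a::r₂) := R.consList [e] hw₂
        _ ≋ (e::a::e::b::a::r₂) := R.commF (far_symm heb) [e,a] (a::r₂)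
        _ ≋ (a::e::a::b::a::r₂) := R.braidF hea [] (b::a::r₂)
        _ ≋ (a::e::b::a::b::r₂) := R.braidF hadj [a,e] r₂
        _ ≋ (a::b::e::a::b::r₂) := R.commF heb [a] (a::b::r₂)
  · -- a b far
    rw [cw_far hfar] at hs1; rw [cw_far (far_symm hfar)] at hs2
    obtain ⟨r, hr1, hr2⟩ :=
      keyCons K (show R (e :: w₁) (b :: s) from hs1) (by omega)
    rw [cw_far heb] at hr1; rw [cw_far (far_symm heb)] at hr2
    -- hr1 : R w₁ ([b]++r) ; hr2 : R s ([e]++r)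
    refine ⟨e::a::r, ?_, ?_⟩
    · rw [cw_adj (adj_symm hea), cw_far hfar]
      calc (e::a::w₁) ≋ (e::a::b::r) := R.consList [e,a] hr1
        _ ≋ (e::b::a::r) := R.commF hfar [e] r
        _ ≋ (b::e::a::r) := R.commF heb [] (a::r)
    · rw [cw_far (far_symm heb), cw_far (far_symm hfar)]
      calc (e::w₂) ≋ (e::a::e::r) := R.cons e (hs2.trans (R.consList [a] hr2))
        _ ≋ (a::e::a::r) := R.braidF hea [] r

lemma cube_aa {L : ℕ} (K : KeyHyp L) {e a b : ℕ} (hea : Adj e a) (heb : Adj e b)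
    (hab : a ≠ b) {w₁ w₂ : List ℕ}
    (H : R (cw e a ++ w₁) (cw e b ++ w₂))
    (hL : (cw e a ++ w₁).length ≤ L) :
    ∃ w, (R (cw a e ++ w₁) (cw a b ++ w)) ∧ (R (cw b e ++ w₂) (cw b a ++ w)) := by
  have hfar : Far a b := by unfold Adj at hea heb; unfold Far; omega
  rw [cw_adj hea, cw_adj heb] at H
  have hw : w₁.length + 2 ≤ L := by
    rw [cw_adj hea] at hL; simp at hL; omega
  have hlen12 : w₂.length = w₁.length := by have := H.length; simp at this; omega
  obtain ⟨s, hs1, hs2⟩ :=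
    keyCons K (show R (a :: (e :: w₁)) (b :: (e :: w₂)) from H) (by simp; omega)
  rw [cw_far hfar] at hs1; rw [cw_far (far_symm hfar)] at hs2
  have hlens : s.length + 1 = w₁.length + 1 := by
    have := hs1.length; simp at this; omega
  obtain ⟨r, hr1, hr2⟩ := keyCons K (show R (e :: w₁) (b :: s) from hs1) (by omega)
  rw [cw_adj heb] at hr1; rw [cw_adj (adj_symm heb)] at hr2
  obtain ⟨t, ht1, ht2⟩ := keyCons K (show R (e :: w₂) (a :: s) from hs2) (by omega)
  rw [cw_adj hea] at ht1; rw [cw_adj (adj_symm hea)] at ht2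
  -- hr1 : R w₁ ([b,e]++r), hr2 : R s ([e,b]++r), ht1 : R w₂ ([a,e]++t), ht2 : R s ([e,a]++t)
  have hlenr : r.length + 2 = s.length := by
    have := hr2.length; simp at this; omega
  have hba : R (b::r) (a::t) :=
    peel1 K (show R (e::(b::r)) (e::(a::t)) from hr2.symm.trans ht2) (by simp; omega)
  obtain ⟨m, hm1, hm2⟩ := keyCons K hba (by omega)
  rw [cw_far (far_symm hfar)] at hm1; rw [cw_far hfar] at hm2
  -- hm1 : R r ([a]++m), hm2 : R t ([b]++m)
  refine ⟨e::b::a::e::m, ?_, ?_⟩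
  · rw [cw_adj (adj_symm hea), cw_far hfar]
    have hw₁ : R w₁ (b::e::a::m) := hr1.trans (R.consList [b,e] hm1)
    calc (e::a::w₁) ≋ (e::a::b::e::a::m) := R.consList [e,a] hw₁
      _ ≋ (e::b::a::e::a::m) := R.commF hfar [e] (e::a::m)
      _ ≋ (e::b::e::a::e::m) := R.braidF (adj_symm hea) [e,b] m
      _ ≋ (b::e::b::a::e::m) := R.braidF heb [] (a::e::m)
  · rw [cw_adj (adj_symm heb), cw_far (far_symm hfar)]
    have hw₂ : R w₂ (a::e::b::m) := ht1.trans (R.consList [a,e] hm2)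
    calc (e::b::w₂) ≋ (e::b::a::e::b::m) := R.consList [e,b] hw₂
      _ ≋ (e::a::b::e::b::m) := R.commF (far_symm hfar) [e] (e::b::m)
      _ ≋ (e::a::e::b::e::m) := R.braidF (adj_symm heb) [e,a] m
      _ ≋ (a::e::a::b::e::m) := R.braidF hea [] (b::e::m)
      _ ≋ (a::e::b::a::e::m) := R.commF hfar [a,e] (e::m)

lemma cube {L : ℕ} (K : KeyHyp L) {e a b : ℕ} (hab : a ≠ b) {w₁ w₂ : List ℕ}
    (H : R (cw e a ++ w₁) (cw e b ++ w₂))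
    (hL : (cw e a ++ w₁).length ≤ L) :
    ∃ w, (R (cw a e ++ w₁) (cw a b ++ w)) ∧ (R (cw b e ++ w₂) (cw b a ++ w)) := by
  have hLr : (cw e b ++ w₂).length ≤ L := by rw [← H.length]; exact hL
  rcases trichotomy e a with h1 | h1 | h1
  · subst h1
    simp only [cw_self, List.nil_append] at H ⊢
    exact ⟨w₂, H, R.refl _⟩
  · rcases trichotomy e b with h2 | h2 | h2
    · subst h2
      simp only [cw_self, List.nil_append] at H ⊢
      exact ⟨w₁, R.refl _, H.symm⟩
    · exact cube_aa K h1 h2 hab H hL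
    · exact cube_af K h1 h2 hab H hL
  · rcases trichotomy e b with h2 | h2 | h2
    · subst h2
      simp only [cw_self, List.nil_append] at H ⊢
      exact ⟨w₁, R.refl _, H.symm⟩
    · obtain ⟨w, hA, hB⟩ := cube_af K h2 h1 (Ne.symm hab) H.symm hLr
      exact ⟨w, hB, hA⟩
    · exact cube_ff K h1 h2 hab H hL

theorem key : ∀ ℓ : ℕ, KeyHyp ℓ := by
  intro ℓ
  induction ℓ using Nat.strong_induction_on with
  | _ ℓ IH =>
    intro x y h
    induction h with
    | of hb =>
      intro hlen a u b v hx hy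
      cases hb with
      | comm hc =>
        rename_i x₁ y₁
        cases hx; cases hy
        refine ⟨[], ?_, ?_⟩
        · rw [cw_far (Or.inl hc)]; simpa using R.refl _
        · rw [cw_far (Or.inr hc)]; simpa using R.refl _
      | braid z =>
        cases hx; cases hy
        refine ⟨[], ?_, ?_⟩
        · rw [cw_adj (Or.inl rfl)]; simpa using R.refl _
        · rw [cw_adj (Or.inr rfl)]; simpa using R.refl _
    | refl x =>
      intro hlen a u b v hx hy
      rw [hx] at hy
      cases hy
      exact ⟨u, by simpa using R.refl _, by simpa using R.refl _⟩
    | symm h ih =>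
      intro hlen a u b v hx hy
      obtain ⟨w, h1, h2⟩ := ih (by rw [h.length]; exact hlen) b v a u hy hx
      exact ⟨w, h2, h1⟩
    | trans h₁ h₂ ih₁ ih₂ =>
      rename_i x z y
      intro hlen a u b v hx hy
      subst hx; subst hy
      have hl0 : 1 ≤ ℓ := le_trans (by simp) hlen
      have K' : KeyHyp (ℓ - 1) := IH (ℓ - 1) (by omega)
      cases z with
      | nil => exact absurd h₁.length (by simp)
      | cons e z' =>
        obtain ⟨w₁, hu, hz1⟩ := ih₁ hlen a u e z' rfl rfl
        obtain ⟨w₂, hz2, hv⟩ := ih₂ (by rw [← h₁.length]; exact hlen) e z' b v rfl rfl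
        have H : R (cw e a ++ w₁) (cw e b ++ w₂) := hz1.symm.trans hz2
        have hzlen : (cw e a ++ w₁).length ≤ ℓ - 1 := by
          rw [← hz1.length]
          have h2 := h₁.length
          simp only [List.length_cons] at h2 hlen
          omega
        by_cases hab : a = b
        · subst hab
          have hw12 : R w₁ w₂ := by
            refine peelW K' ?_ H hzlen
            unfold cw
            split
            · simp
            · split <;> simp
          refine ⟨cw a e ++ w₁, ?_, ?_⟩
          · simpa using hu
          · simpa using hv.trans (R.consList (cw a e) hw12.symm)
        · obtain ⟨w, hA, hB⟩ := cube K' hab H hzlen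
          exact ⟨w, hu.trans hA, hv.trans hB⟩
    | append h₁ h₂ ih₁ ih₂ =>
      rename_i p q p' q'
      intro hlen a u b v hx hy
      cases p with
      | nil =>
        have hq : p' = [] := List.eq_nil_of_length_eq_zero (by simpa using h₁.length.symm)
        subst hq
        simp only [List.nil_append] at hx hy
        exact ih₂ (by simpa [hx] using hlen) a u b v hx hy
      | cons a₀ p₁ =>
        cases p' with
        | nil => exact absurd h₁.length (by simp)
        | cons b₀ q₁ =>
          simp only [List.cons_append] at hx hy
          injection hx with ha hu
          injection hy with hb hv
          cases ha; cases hb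
          obtain ⟨w', hA, hB⟩ := ih₁
            (by simp only [List.length_cons, List.length_append] at hlen ⊢; omega)
            a p₁ b q₁ rfl rfl
          refine ⟨w' ++ q', ?_, ?_⟩
          · rw [← hu, ← List.append_assoc]
            exact R.append hA h₂
          · rw [← hv, ← List.append_assoc]
            exact R.append hB (R.refl q')

lemma R.cancel_head {a : ℕ} {u v : List ℕ} (h : R (a :: u) (a :: v)) : R u v :=
  peel1 (key (u.length + 1)) h le_rfl

lemma R.cancel_left {p u v : List ℕ} (h : R (p ++ u) (p ++ v)) : R u v := by
  induction p with
  | nil => exact h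
  | cons x p' ih => exact ih (R.cancel_head h)

lemma R.cancel_right {p u v : List ℕ} (h : R (u ++ p) (v ++ p)) : R u v := by
  have := (R.cancel_left (by simpa using h.rev) : R u.reverse v.reverse).rev
  simpa using this

/-- letter commuting past a whole word -/
lemma R.commAll {x : ℕ} {P : List ℕ} (h : ∀ y ∈ P, Far x y) : R (x :: P) (P ++ [x]) := by
  induction P with
  | nil => exact R.refl _
  | cons y P' ih =>
    calc (x :: y :: P') ≋ (y :: x :: P') := R.commF (h y (by simp)) [] P'
      _ ≋ (y :: (P' ++ [x])) := R.cons y (ih fun z hz => h z (by simp [hz]))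

/-- the word `K, K-1, ..., 0` -/
def descW : ℕ → List ℕ
  | 0 => [0]
  | (k+1) => (k+1) :: descW k

/-- the Garside half twist word on letters `0, ..., K-1` -/
def Δw : ℕ → List ℕ
  | 0 => []
  | (k+1) => Δw k ++ descW k

lemma descW_mem : ∀ {k x}, x ∈ descW k → x ≤ k := by
  intro k
  induction k with
  | zero => intro x hx; simp [descW] at hx; omega
  | succ k ih =>
    intro x hx
    simp only [descW, List.mem_cons] at hx
    rcases hx with h | h
    · omega
    · have := ih h; omega

lemma delta_bounded : ∀ {K}, Bounded K (Δw K) := by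
  intro K
  induction K with
  | zero => intro x hx; simp [Δw] at hx
  | succ K ih =>
    intro x hx
    simp only [Δw, List.mem_append] at hx
    rcases hx with h | h
    · have := ih x h; omega
    · have := descW_mem h; omega

/-- moving a letter through the descending word increments it -/
lemma descW_step : ∀ {K t : ℕ}, t + 1 ≤ K → R (t :: descW K) (descW K ++ [t + 1]) := by
  intro K
  induction K with
  | zero => intro t ht; omega
  | succ K ih =>
    intro t ht
    by_cases htK : t = K
    · cases htK
      clear ih ht
      cases K with
      | zero =>
        exact R.braidF (Or.inl rfl) [] []
      | succ K' =>
        show R ((K'+1) :: descW (K'+2)) (descW (K'+2) ++ [K'+2])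
        calc (K'+1) :: descW (K'+2)
            ≋ ((K'+2) :: (K'+1) :: (K'+2) :: descW K') := R.braidF (Or.inl rfl) [] (descW K')
          _ ≋ ((K'+2) :: (K'+1) :: (descW K' ++ [K'+2])) :=
              R.consList [K'+2, K'+1]
                (R.commAll fun y hy => Or.inr (by have := descW_mem hy; omega))
    · have ht' : t + 1 ≤ K := by omega
      calc (t :: descW (K+1)) ≋ ((K+1) :: t :: descW K) :=
            R.commF (Or.inl (by omega)) [] (descW K)
        _ ≋ ((K+1) :: (descW K ++ [t+1])) := R.cons (K+1) (ih ht')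

/-- a word moves through the descending word by incrementing all letters -/
lemma descW_shift : ∀ {P : List ℕ} {K}, (∀ x ∈ P, x + 1 ≤ K) →
    R (P ++ descW K) (descW K ++ P.map (· + 1)) := by
  intro P
  induction P with
  | nil => intro K h; simpa using R.refl _
  | cons x P' ih =>
    intro K h
    calc ((x :: P') ++ descW K) ≋ (x :: (descW K ++ P'.map (· + 1))) :=
          R.cons x (ih fun z hz => h z (by simp [hz]))
      _ ≋ ((descW K ++ [x+1]) ++ P'.map (· + 1)) := by
          have := R.appendRight (P'.map (· + 1)) (descW_step (h x (by simp)))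
          simpa using this
      _ ≋ (descW K ++ (x :: P').map (· + 1)) := by
          simpa [List.append_assoc] using R.refl (descW K ++ (x+1) :: P'.map (· + 1))

/-- ascending word -/
def ascW (k : ℕ) : List ℕ := (descW k).reverse

lemma asc_delta : ∀ K, R (ascW K ++ Δw K) (Δw K ++ descW K) := by
  intro K
  induction K with
  | zero => exact R.refl [0]
  | succ K ih =>
    have hasc : ascW (K+1) = ascW K ++ [K+1] := by simp [ascW, descW]
    calc (ascW (K+1) ++ Δw (K+1))
        ≋ (ascW K ++ ([K+1] ++ Δw K) ++ descW K) := by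
          rw [hasc]; simp only [Δw, List.append_assoc]
          exact R.refl _
      _ ≋ (ascW K ++ (Δw K ++ [K+1]) ++ descW K) := by
          refine R.append (R.consList (ascW K) ?_) (R.refl (descW K))
          exact R.commAll fun y hy => Or.inr (by have := delta_bounded y hy; omega)
      _ ≋ ((ascW K ++ Δw K) ++ ((K+1) :: descW K)) := by
          simpa [List.append_assoc] using R.refl _
      _ ≋ ((Δw K ++ descW K) ++ ((K+1) :: descW K)) := R.appendRight _ ih
      _ ≋ (Δw (K+1) ++ descW (K+1)) := by
          simp only [Δw, descW, List.append_assoc]; exact R.refl _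

lemma rev_delta : ∀ K, R (Δw K).reverse (Δw K) := by
  intro K
  induction K with
  | zero => exact R.refl []
  | succ K ih =>
    calc (Δw (K+1)).reverse ≋ (ascW K ++ (Δw K).reverse) := by
          simp only [Δw, List.reverse_append, ascW]; exact R.refl _
      _ ≋ (ascW K ++ Δw K) := R.consList _ ih
      _ ≋ (Δw K ++ descW K) := asc_delta K
      _ ≋ (Δw (K+1)) := by rw [Δw]; exact R.refl _

/-- fundamental property: a letter moves through Δ by flipping -/
lemma delta_conj : ∀ {K s : ℕ}, s < K → R (s :: Δw K) (Δw K ++ [K - 1 - s]) := by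
  intro K
  induction K with
  | zero => omega
  | succ K ih =>
    have branch1 : ∀ s, s < K → R (s :: Δw (K+1)) (Δw (K+1) ++ [K - s]) := by
      intro s hs
      calc (s :: Δw (K+1)) ≋ ((s :: Δw K) ++ descW K) := by
            rw [Δw]; exact R.refl _
        _ ≋ ((Δw K ++ [K - 1 - s]) ++ descW K) := R.appendRight _ (ih hs)
        _ ≋ (Δw K ++ ((K-1-s) :: descW K)) := by
            simpa [List.append_assoc] using R.refl _
        _ ≋ (Δw K ++ (descW K ++ [K-1-s+1])) := R.consList _ (descW_step (by omega))
        _ ≋ (Δw (K+1) ++ [K - s]) := by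
            have : K - 1 - s + 1 = K - s := by omega
            rw [this, Δw, List.append_assoc]
            exact R.refl _
    intro s hs
    by_cases hsK : s < K
    · have := branch1 s hsK
      have he : K + 1 - 1 - s = K - s := by omega
      rw [he]; exact this
    · have hsEq : s = K := by omega
      have hz : K + 1 - 1 - s = 0 := by omega
      rw [hz, hsEq]
      rcases Nat.eq_zero_or_pos K with h0 | hpos
      · subst h0
        exact R.refl _
      · have h0 := branch1 0 hpos
        have h0r := h0.rev
        simp only [List.reverse_cons, List.reverse_append, List.reverse_nil,
          List.nil_append, Nat.sub_zero] at h0r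
        -- h0r : R ((Δw (K+1)).reverse ++ [0]) (K :: (Δw (K+1)).reverse)
        calc (K :: Δw (K+1)) ≋ (K :: (Δw (K+1)).reverse) :=
              R.cons K (rev_delta (K+1)).symm
          _ ≋ ((Δw (K+1)).reverse ++ [0]) := h0r.symm
          _ ≋ (Δw (K+1) ++ [0]) := R.appendRight _ (rev_delta (K+1))

/-- a word moves through Δ by flipping all letters -/
lemma delta_word_conj : ∀ {P : List ℕ} {K}, Bounded K P →
    R (P ++ Δw K) (Δw K ++ P.map (fun x => K - 1 - x)) := by
  intro P
  induction P with
  | nil => intro K h; simpa using R.refl _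
  | cons x P' ih =>
    intro K h
    calc ((x :: P') ++ Δw K) ≋ (x :: (Δw K ++ P'.map (fun x => K - 1 - x))) :=
          R.cons x (ih fun z hz => h z (by simp [hz]))
      _ ≋ ((Δw K ++ [K - 1 - x]) ++ P'.map (fun x => K - 1 - x)) :=
          R.appendRight _ (delta_conj (h x (by simp)))
      _ ≋ (Δw K ++ (x :: P').map (fun x => K - 1 - x)) := by
          simpa [List.append_assoc] using R.refl _

lemma tau_delta {K : ℕ} : R ((Δw K).map (fun x => K - 1 - x)) (Δw K) :=
  (R.cancel_left (delta_word_conj delta_bounded)).symm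

lemma delta_ldiv : ∀ {K s : ℕ}, s < K → ∃ C, R (Δw K) (s :: C) := by
  intro K
  induction K with
  | zero => omega
  | succ K ih =>
    intro s hs
    by_cases hsK : s < K
    · obtain ⟨C, hC⟩ := ih hsK
      exact ⟨C ++ descW K, by
        have := R.appendRight (descW K) hC
        show R (Δw K ++ descW K) _
        simpa using this⟩
    · have hsEq : s = K := by omega
      cases hsEq
      have hshift : R (Δw K ++ descW K) (descW K ++ (Δw K).map (· + 1)) :=
        descW_shift fun x hx => by have := delta_bounded x hx; omega
      cases K with
      | zero => exact ⟨[], R.refl [0]⟩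
      | succ K' =>
        refine ⟨descW K' ++ (Δw (K'+1)).map (· + 1), ?_⟩
        show R (Δw (K'+1) ++ descW (K'+1)) _
        simpa [descW] using hshift

lemma delta_rdiv {K s : ℕ} (hs : s < K) : ∃ D, R (Δw K) (D ++ [s]) := by
  obtain ⟨C, hC⟩ := delta_ldiv hs
  refine ⟨C.reverse, ?_⟩
  have := (rev_delta K).symm.trans hC.rev
  simpa using this

/-- flipping letters preserves the relation on bounded words -/
lemma R.tau {K : ℕ} : ∀ {u v : List ℕ}, R u v → Bounded K u →
    R (u.map (fun x => K - 1 - x)) (v.map (fun x => K - 1 - x)) := by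
  intro u v h
  induction h with
  | of hb =>
    intro hbd
    cases hb with
    | comm hc =>
      rename_i x y
      have hx : x < K := hbd x (by simp)
      have hy : y < K := hbd y (by simp)
      have hfar : (K - 1 - y) + 2 ≤ K - 1 - x := by omega
      exact R.commF (Or.inr hfar) [] []
    | braid x =>
      have hx : x + 1 < K := hbd (x+1) (by simp)
      have h2 : K - 1 - x = (K - 1 - (x+1)) + 1 := by omega
      show R [K-1-x, K-1-(x+1), K-1-x] [K-1-(x+1), K-1-x, K-1-(x+1)]
      rw [h2]
      exact R.braidF (Or.inr rfl) [] []
  | refl x => intro _; exact R.refl _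
  | symm h ih =>
    intro hbd
    exact (ih (h.bounded.mpr hbd)).symm
  | trans h₁ h₂ ih₁ ih₂ =>
    intro hbd
    exact (ih₁ hbd).trans (ih₂ (h₁.bounded.mp hbd))
  | append h₁ h₂ ih₁ ih₂ =>
    intro hbd
    simp only [List.map_append]
    exact R.append (ih₁ fun x hx => hbd x (by simp [hx]))
      (ih₂ fun x hx => hbd x (by simp [hx]))

/-- powers of the half twist -/
def Δpow (K : ℕ) : ℕ → List ℕ
  | 0 => []
  | (a+1) => Δw K ++ Δpow K a

lemma delta_pow_bounded {K a : ℕ} : Bounded K (Δpow K a) := by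
  induction a with
  | zero => intro x hx; simp [Δpow] at hx
  | succ a ih =>
    intro x hx
    simp only [Δpow, List.mem_append] at hx
    exact hx.elim (fun h => delta_bounded x h) (fun h => ih x h)

lemma bounded_tau {K : ℕ} {P : List ℕ} (h : Bounded K P) :
    Bounded K (P.map (fun x => K - 1 - x)) := by
  intro x hx
  simp only [List.mem_map] at hx
  obtain ⟨y, hy, rfl⟩ := hx
  have := h y hy
  omega

/-- iterated flip -/
def τpow (K a : ℕ) (P : List ℕ) : List ℕ := (fun Q => Q.map (fun x => K - 1 - x))^[a] P

lemma τpow_bounded {K a : ℕ} {P : List ℕ} (h : Bounded K P) : Bounded K (τpow K a P) := by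
  induction a with
  | zero => exact h
  | succ a ih =>
    rw [τpow, Function.iterate_succ_apply']
    exact bounded_tau ih

lemma delta_pow_conj : ∀ (a : ℕ) {P : List ℕ} {K}, Bounded K P →
    R (P ++ Δpow K a) (Δpow K a ++ τpow K a P) := by
  intro a
  induction a with
  | zero => intro P K h; simpa [Δpow, τpow] using R.refl P
  | succ a ih =>
    intro P K h
    calc (P ++ Δpow K (a+1)) ≋ ((P ++ Δw K) ++ Δpow K a) := by
          rw [Δpow]; simpa [List.append_assoc] using R.refl _
      _ ≋ ((Δw K ++ P.map (fun x => K - 1 - x)) ++ Δpow K a) :=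
          R.appendRight _ (delta_word_conj h)
      _ ≋ (Δw K ++ (P.map (fun x => K - 1 - x) ++ Δpow K a)) := by
          simpa [List.append_assoc] using R.refl _
      _ ≋ (Δw K ++ (Δpow K a ++ τpow K a (P.map (fun x => K - 1 - x)))) :=
          R.consList _ (ih (bounded_tau h))
      _ ≋ (Δpow K (a+1) ++ τpow K (a+1) P) := by
          have hτ : τpow K (a+1) P = τpow K a (P.map (fun x => K - 1 - x)) := by
            rw [τpow, Function.iterate_succ_apply]; rfl
          rw [Δpow, hτ]
          simpa [List.append_assoc, τpow] using R.refl _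

lemma tau_tau {K : ℕ} {P : List ℕ} (h : Bounded K P) :
    (P.map (fun x => K - 1 - x)).map (fun x => K - 1 - x) = P := by
  rw [List.map_map]
  conv_rhs => rw [← List.map_id P]
  refine List.map_congr_left fun x hx => ?_
  have := h x hx
  simp only [Function.comp_apply, id_eq]
  omega

/-! ### Group-level lemmas -/

lemma sigma_mk_eq {n : ℕ} (x : Fin (n-1)) :
    PresentedGroup.mk (braidRels n) (FreeGroup.of x) = σ x := rfl

lemma braid_rel_one {n : ℕ} {r : FreeGroup (Fin (n-1))} (hr : r ∈ braidRels n) :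
    PresentedGroup.mk (braidRels n) r = 1 := by
  have : r ∈ Subgroup.normalClosure (braidRels n) := Subgroup.subset_normalClosure hr
  exact (QuotientGroup.eq_one_iff r).mpr this

lemma braid_comm {n : ℕ} {a b : Fin (n-1)} (h : (a : ℕ) + 1 < (b : ℕ)) :
    σ a * σ b = σ b * σ a := by
  have hmem : (FreeGroup.of a * FreeGroup.of b * (FreeGroup.of a)⁻¹ * (FreeGroup.of b)⁻¹)
      ∈ braidRels n := Or.inl ⟨a, b, h, rfl⟩
  have h1 := braid_rel_one hmem
  simp only [map_mul, map_inv, sigma_mk_eq] at h1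
  calc σ a * σ b = (σ a * σ b * (σ a)⁻¹ * (σ b)⁻¹) * (σ b * σ a) := by group
    _ = 1 * (σ b * σ a) := congrArg (· * (σ b * σ a)) h1
    _ = σ b * σ a := one_mul _

lemma braid_braid {n : ℕ} {a b : Fin (n-1)} (h : (a : ℕ) + 1 = (b : ℕ)) :
    σ a * σ b * σ a = σ b * σ a * σ b := by
  have hmem : (FreeGroup.of a * FreeGroup.of b * FreeGroup.of a *
      (FreeGroup.of b * FreeGroup.of a * FreeGroup.of b)⁻¹) ∈ braidRels n :=
    Or.inr ⟨a, b, h, rfl⟩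
  have h1 := braid_rel_one hmem
  simp only [map_mul, map_inv, sigma_mk_eq] at h1
  calc σ a * σ b * σ a
      = (σ a * σ b * σ a * (σ b * σ a * σ b)⁻¹) * (σ b * σ a * σ b) := by group
    _ = 1 * (σ b * σ a * σ b) := congrArg (· * (σ b * σ a * σ b)) h1
    _ = σ b * σ a * σ b := one_mul _

/-- the generator associated to a natural number index (junk value `1` out of range) -/
def gen (n t : ℕ) : BraidGroup n := if h : t < n - 1 then σ ⟨t, h⟩ else 1

/-- product of generators along a word -/
def wprod (n : ℕ) (w : List ℕ) : BraidGroup n := (w.map (gen n)).prod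

lemma wprod_nil {n : ℕ} : wprod n [] = 1 := rfl

lemma wprod_cons {n : ℕ} (t : ℕ) (w : List ℕ) :
    wprod n (t :: w) = gen n t * wprod n w := by simp [wprod]

lemma wprod_append {n : ℕ} (u v : List ℕ) :
    wprod n (u ++ v) = wprod n u * wprod n v := by simp [wprod]

/-- shifted generators with zero for out-of-window letters -/
def genZ (n s t : ℕ) : WithZero (BraidGroup n) :=
  if h : s ≤ t ∧ t - s < n - 1 then ((σ ⟨t - s, h.2⟩ : BraidGroup n) : WithZero (BraidGroup n))
  else 0

lemma genZ_brel {n s : ℕ} {x y : List ℕ} (h : Brel x y) :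
    ((x.map (genZ n s)).prod = (y.map (genZ n s)).prod) := by
  cases h with
  | comm hc =>
    rename_i a b
    simp only [List.map_cons, List.map_nil, List.prod_cons, List.prod_nil, mul_one]
    simp only [genZ]
    by_cases ha : s ≤ a ∧ a - s < n - 1
    · by_cases hb : s ≤ b ∧ b - s < n - 1
      · rw [dif_pos ha, dif_pos hb, ← WithZero.coe_mul, ← WithZero.coe_mul]
        congr 1
        refine braid_comm ?_
        simp only [Fin.val_mk]
        omega
      · rw [dif_neg hb]
        simp
    · rw [dif_neg ha]
      simp
  | braid a =>
    simp only [List.map_cons, List.map_nil, List.prod_cons, List.prod_nil, mul_one]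
    simp only [genZ]
    by_cases ha : s ≤ a ∧ a - s < n - 1
    · by_cases hb : s ≤ a + 1 ∧ a + 1 - s < n - 1
      · rw [dif_pos ha, dif_pos hb, ← WithZero.coe_mul, ← WithZero.coe_mul,
          ← WithZero.coe_mul, ← WithZero.coe_mul]
        congr 1
        refine braid_braid ?_
        simp only [Fin.val_mk]
        omega
      · rw [dif_neg hb]
        simp [mul_assoc]
    · rw [dif_neg ha]
      simp

lemma genZ_of_R {n s : ℕ} {u v : List ℕ} (h : R u v) :
    ((u.map (genZ n s)).prod = (v.map (genZ n s)).prod) :=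
  R.hom (genZ n s) (fun hb => genZ_brel hb) h

/-- in-window words: `genZ` computes `wprod` of the down-shifted word -/
lemma genZ_window {n s : ℕ} : ∀ {w : List ℕ}, (∀ x ∈ w, s ≤ x ∧ x - s < n - 1) →
    ((w.map (genZ n s)).prod : WithZero (BraidGroup n))
      = ((wprod n (w.map (· - s)) : BraidGroup n) : WithZero (BraidGroup n)) := by
  intro w
  induction w with
  | nil => intro _; simp [wprod]
  | cons t w' ih =>
    intro h
    have ht := h t (by simp)
    simp only [List.map_cons, List.prod_cons, wprod_cons]
    rw [ih (fun x hx => h x (by simp [hx])), genZ, dif_pos ht, gen, dif_pos ht.2,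
      WithZero.coe_mul]

/-- transfer of `R` to equality in the braid group, with window shift -/
lemma R.to_group {n s : ℕ} {u v : List ℕ} (h : R u v)
    (hu : ∀ x ∈ u, s ≤ x ∧ x - s < n - 1) (hv : ∀ x ∈ v, s ≤ x ∧ x - s < n - 1) :
    wprod n (u.map (· - s)) = wprod n (v.map (· - s)) := by
  have := genZ_of_R (n := n) (s := s) h
  rw [genZ_window hu, genZ_window hv] at this
  exact_mod_cast this

lemma R.to_group0 {n : ℕ} {u v : List ℕ} (h : R u v)
    (hu : Bounded (n-1) u) (hv : Bounded (n-1) v) : wprod n u = wprod n v := by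
  have := h.to_group (n := n) (s := 0) (fun x hx => ⟨Nat.zero_le x, by simpa using hu x hx⟩)
    (fun x hx => ⟨Nat.zero_le x, by simpa using hv x hx⟩)
  simpa using this

/-! ### extra word lemmas for the fraction action -/

lemma delta_pow_add {K : ℕ} : ∀ a b, Δpow K (a + b) = Δpow K a ++ Δpow K b := by
  intro a
  induction a with
  | zero => intro b; simp [Δpow]
  | succ a ih =>
    intro b
    have : a + 1 + b = (a + b) + 1 := by omega
    rw [this, Δpow, Δpow, ih, List.append_assoc]

/-- letter-level iterated flip -/
def τla (K a t : ℕ) : ℕ := if Even a then t else K - 1 - t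

lemma τla_lt {K a t : ℕ} (h : t < K) : τla K a t < K := by
  unfold τla; split <;> omega

lemma τla_zero {K t : ℕ} : τla K 0 t = t := by simp [τla]

lemma τla_succ {K a t : ℕ} (h : t < K) : τla K (a+1) t = K - 1 - τla K a t := by
  by_cases he : Even a <;> simp [τla, he, Nat.even_add_one] <;> omega

lemma τla_add {K a b t : ℕ} (h : t < K) : τla K a (τla K b t) = τla K (a + b) t := by
  by_cases ha : Even a <;> by_cases hb : Even b <;>
    simp [τla, ha, hb, Nat.even_add] <;> omega

lemma τla_invol {K a t : ℕ} (h : t < K) : τla K a (τla K a t) = t := by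
  rw [τla_add h]
  by_cases ha : Even a <;> simp [τla, Nat.even_add, ha] <;> omega

lemma τla_far {K k a b : ℕ} (h : a + 2 ≤ b) (hb : b < K) :
    Far (τla K k a) (τla K k b) := by
  unfold τla Far; split <;> omega

lemma τla_adj {K k a b : ℕ} (h : b = a + 1) (hb : b < K) :
    Adj (τla K k a) (τla K k b) := by
  unfold τla Adj; split <;> omega

lemma τpow_single {K a t : ℕ} (h : t < K) : τpow K a [t] = [τla K a t] := by
  induction a with
  | zero => simp [τpow, τla]
  | succ a ih =>
    rw [τpow, Function.iterate_succ_apply']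
    rw [τpow] at ih
    rw [ih]
    simp only [List.map_cons, List.map_nil]
    rw [τla_succ h]

lemma τpow_succ' {K a : ℕ} (u : List ℕ) :
    τpow K (a+1) u = (τpow K a u).map (fun x => K - 1 - x) := by
  rw [τpow, τpow, Function.iterate_succ_apply']

lemma τpow_succ_front {K a : ℕ} (u : List ℕ) :
    τpow K (a+1) u = τpow K a (u.map (fun x => K - 1 - x)) := by
  rw [τpow, τpow, Function.iterate_succ_apply]

lemma τpow_append {K a : ℕ} (u v : List ℕ) :
    τpow K a (u ++ v) = τpow K a u ++ τpow K a v := by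
  induction a with
  | zero => rfl
  | succ a ih => rw [τpow_succ', τpow_succ', τpow_succ', ih, List.map_append]

lemma R.τpow_congr {K a : ℕ} {u v : List ℕ} (h : R u v) (hu : Bounded K u) :
    R (τpow K a u) (τpow K a v) := by
  induction a with
  | zero => exact h
  | succ a ih =>
    rw [τpow_succ', τpow_succ']
    exact R.tau ih (τpow_bounded hu)

lemma τpow_delta {K a : ℕ} : R (τpow K a (Δw K)) (Δw K) := by
  induction a with
  | zero => exact R.refl _
  | succ a ih =>
    rw [τpow_succ_front]
    have h1 : R (τpow K a ((Δw K).map (fun x => K - 1 - x))) (τpow K a (Δw K)) :=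
      R.τpow_congr tau_delta (bounded_tau delta_bounded)
    exact (h1.trans ih :)

lemma τpow_eq {K a : ℕ} {u : List ℕ} (h : Bounded K u) :
    τpow K a u = if Even a then u else u.map (fun x => K - 1 - x) := by
  induction a with
  | zero => simp [τpow]
  | succ a ih =>
    rw [τpow, Function.iterate_succ_apply']
    rw [τpow] at ih
    rw [ih]
    by_cases he : Even a <;> simp [he, Nat.even_add_one, tau_tau h]

lemma τpow_τpow {K a : ℕ} {u : List ℕ} (h : Bounded K u) :
    τpow K a (τpow K a u) = u := by
  by_cases he : Even a
  · rw [τpow_eq h, if_pos he, τpow_eq h, if_pos he]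
  · rw [τpow_eq h, if_neg he, τpow_eq (bounded_tau h), if_neg he, tau_tau h]

/-- chosen right complement of a letter in Δ -/
noncomputable def Dc (K t : ℕ) : List ℕ :=
  if h : t < K then Classical.choose (delta_rdiv h) else []

lemma Dc_spec {K t : ℕ} (h : t < K) : R (Δw K) (Dc K t ++ [t]) := by
  rw [Dc, dif_pos h]
  exact Classical.choose_spec (delta_rdiv h)

lemma Dc_bounded {K t : ℕ} (h : t < K) : Bounded K (Dc K t) := by
  have := (Dc_spec h).bounded.mp delta_bounded
  intro x hx
  exact this x (by simp [hx])

lemma tau_compl {K t : ℕ} (ht : t < K) : R ((K - 1 - t) :: Dc K t) (Δw K) := by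
  have h1 : R (((K - 1 - t) :: Dc K t) ++ [t]) (Δw K ++ [t]) := by
    have e1 : ((K-1-t) :: Dc K t) ++ [t] = (K-1-t) :: (Dc K t ++ [t]) := by simp
    rw [e1]
    calc ((K-1-t) :: (Dc K t ++ [t])) ≋ ((K-1-t) :: Δw K) := R.cons _ (Dc_spec ht).symm
      _ ≋ (Δw K ++ [K - 1 - (K - 1 - t)]) := delta_conj (by omega)
      _ ≋ (Δw K ++ [t]) := by
          have : K - 1 - (K - 1 - t) = t := by omega
          rw [this]; exact R.refl _
  exact R.cancel_right h1

lemma single_pow_conj {K a t : ℕ} (h : t < K) :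
    R (Δpow K a ++ [t]) ([τla K a t] ++ Δpow K a) := by
  have h2 : τla K a t < K := τla_lt h
  have h3 := delta_pow_conj a (P := [τla K a t]) (K := K)
    (fun x hx => by simp at hx; omega)
  rw [τpow_single h2, τla_invol h] at h3
  exact h3.symm

/-! ### the fraction set `X` and the permutation action -/

/-- setoid of formal fractions `Δ⁻ᵏ · p` -/
def XS (K : ℕ) : Setoid (ℕ × List ℕ) where
  r p q := ∃ a b : ℕ, a + p.1 = b + q.1 ∧ R (Δpow K a ++ p.2) (Δpow K b ++ q.2)
  iseqv := by
    constructor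
    · exact fun p => ⟨0, 0, rfl, R.refl _⟩
    · rintro p q ⟨a, b, hab, h⟩; exact ⟨b, a, hab.symm, h.symm⟩
    · rintro p q r ⟨a, b, hab, h1⟩ ⟨c, d, hcd, h2⟩
      refine ⟨c + a, b + d, by omega, ?_⟩
      have e1 : Δpow K (c + a) ++ p.2 = Δpow K c ++ (Δpow K a ++ p.2) := by
        rw [delta_pow_add]; simp [List.append_assoc]
      have e2 : Δpow K c ++ (Δpow K b ++ q.2) = Δpow K b ++ (Δpow K c ++ q.2) := by
        rw [← List.append_assoc, ← List.append_assoc, ← delta_pow_add, ← delta_pow_add,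
          Nat.add_comm]
      have e3 : Δpow K b ++ (Δpow K d ++ r.2) = Δpow K (b + d) ++ r.2 := by
        rw [delta_pow_add]; simp [List.append_assoc]
      rw [e1, ← e3]
      calc Δpow K c ++ (Δpow K a ++ p.2) ≋ Δpow K c ++ (Δpow K b ++ q.2) :=
            R.consList _ h1
        _ ≋ Δpow K b ++ (Δpow K c ++ q.2) := by rw [e2]; exact R.refl _
        _ ≋ Δpow K b ++ (Δpow K d ++ r.2) := R.consList _ h2

/-- the set on which the braid group acts -/
def X (K : ℕ) := Quotient (XS K)

def permFun (K t : ℕ) : ℕ × List ℕ → ℕ × List ℕ := fun p => (p.1, τla K p.1 t :: p.2)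

noncomputable def permInvFun (K t : ℕ) : ℕ × List ℕ → ℕ × List ℕ :=
  fun p => (p.1 + 1, Dc K (τla K p.1 t) ++ p.2)

lemma permFun_wd {K t : ℕ} (ht : t < K) {p q : ℕ × List ℕ} (h : (XS K).r p q) :
    (XS K).r (permFun K t p) (permFun K t q) := by
  obtain ⟨a, b, hab, hR⟩ := h
  refine ⟨a, b, by simp only [permFun]; omega, ?_⟩
  have step1 : R (Δpow K a ++ (τla K p.1 t :: p.2))
      ([τla K (a + p.1) t] ++ (Δpow K a ++ p.2)) := by
    have h1 := R.appendRight p.2 (single_pow_conj (τla_lt ht) (a := a) (t := τla K p.1 t))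
    rw [τla_add ht] at h1
    simpa [List.append_assoc] using h1
  have step2 : R (Δpow K b ++ (τla K q.1 t :: q.2))
      ([τla K (b + q.1) t] ++ (Δpow K b ++ q.2)) := by
    have h1 := R.appendRight q.2 (single_pow_conj (τla_lt ht) (a := b) (t := τla K q.1 t))
    rw [τla_add ht] at h1
    simpa [List.append_assoc] using h1
  show R (Δpow K a ++ (τla K p.1 t :: p.2)) (Δpow K b ++ (τla K q.1 t :: q.2))
  calc (Δpow K a ++ (τla K p.1 t :: p.2))
      ≋ ([τla K (a + p.1) t] ++ (Δpow K a ++ p.2)) := step1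
    _ ≋ ([τla K (a + p.1) t] ++ (Δpow K b ++ q.2)) := R.consList _ hR
    _ ≋ (Δpow K b ++ (τla K q.1 t :: q.2)) := by
        rw [hab]
        exact step2.symm

lemma permInvFun_wd {K t : ℕ} (ht : t < K) {p q : ℕ × List ℕ} (h : (XS K).r p q) :
    (XS K).r (permInvFun K t p) (permInvFun K t q) := by
  obtain ⟨a, b, hab, hR⟩ := h
  refine ⟨a, b, by simp only [permInvFun]; omega, ?_⟩
  set t₁ := τla K p.1 t with ht₁
  set t₂ := τla K q.1 t with ht₂
  have ht₁K : t₁ < K := τla_lt ht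
  have ht₂K : t₂ < K := τla_lt ht
  have conj : ∀ (c : ℕ) (u : ℕ) (hu : u < K),
      R (Δpow K c ++ Dc K u) (τpow K c (Dc K u) ++ Δpow K c) := by
    intro c u hu
    have h1 := delta_pow_conj c (P := τpow K c (Dc K u)) (K := K)
      (τpow_bounded (Dc_bounded hu))
    rw [τpow_τpow (Dc_bounded hu)] at h1
    exact h1.symm
  have key0 : R (τpow K a (Dc K t₁)) (τpow K b (Dc K t₂)) := by
    have hA : R (Δw K) (τpow K a (Dc K t₁) ++ [τla K (a + p.1) t]) := by
      have h1 := R.τpow_congr (a := a) (Dc_spec ht₁K) delta_bounded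
      rw [τpow_append, τpow_single ht₁K, ht₁, τla_add ht] at h1
      exact (τpow_delta.symm.trans h1 :)
    have hB : R (Δw K) (τpow K b (Dc K t₂) ++ [τla K (b + q.1) t]) := by
      have h1 := R.τpow_congr (a := b) (Dc_spec ht₂K) delta_bounded
      rw [τpow_append, τpow_single ht₂K, ht₂, τla_add ht] at h1
      exact (τpow_delta.symm.trans h1 :)
    rw [hab] at hA
    exact R.cancel_right (hA.symm.trans hB)
  show R (Δpow K a ++ (Dc K t₁ ++ p.2)) (Δpow K b ++ (Dc K t₂ ++ q.2))
  calc (Δpow K a ++ (Dc K t₁ ++ p.2))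
      ≋ ((Δpow K a ++ Dc K t₁) ++ p.2) := by
        simpa [List.append_assoc] using R.refl _
    _ ≋ ((τpow K a (Dc K t₁) ++ Δpow K a) ++ p.2) := R.appendRight _ (conj a t₁ ht₁K)
    _ ≋ (τpow K a (Dc K t₁) ++ (Δpow K a ++ p.2)) := by
        simpa [List.append_assoc] using R.refl _
    _ ≋ (τpow K b (Dc K t₂) ++ (Δpow K b ++ q.2)) := R.append key0 hR
    _ ≋ ((τpow K b (Dc K t₂) ++ Δpow K b) ++ q.2) := by
        simpa [List.append_assoc] using R.refl _
    _ ≋ ((Δpow K b ++ Dc K t₂) ++ q.2) := R.appendRight _ (conj b t₂ ht₂K).symm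
    _ ≋ (Δpow K b ++ (Dc K t₂ ++ q.2)) := by
        simpa [List.append_assoc] using R.refl _

/-- the permutation of `X K` induced by generator `t` -/
noncomputable def gPerm (K t : ℕ) (ht : t < K) : Equiv.Perm (X K) where
  toFun := Quotient.map (permFun K t) (fun _ _ h => permFun_wd ht h)
  invFun := Quotient.map (permInvFun K t) (fun _ _ h => permInvFun_wd ht h)
  left_inv := by
    intro x
    induction x using Quotient.inductionOn with
    | _ p =>
      refine Quotient.sound ?_
      show (XS K).r (permInvFun K t (permFun K t p)) p
      refine ⟨0, 1, by simp [permInvFun, permFun]; omega, ?_⟩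
      show R (Δpow K 0 ++ (Dc K (τla K p.1 t) ++ (τla K p.1 t :: p.2)))
        (Δpow K 1 ++ p.2)
      have e1 : Δpow K 0 ++ (Dc K (τla K p.1 t) ++ (τla K p.1 t :: p.2))
          = (Dc K (τla K p.1 t) ++ [τla K p.1 t]) ++ p.2 := by
        simp [Δpow, List.append_assoc]
      have e2 : Δpow K 1 ++ p.2 = Δw K ++ p.2 := by simp [Δpow]
      rw [e1, e2]
      exact R.appendRight _ (Dc_spec (τla_lt ht)).symm
  right_inv := by
    intro x
    induction x using Quotient.inductionOn with
    | _ p =>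
      refine Quotient.sound ?_
      show (XS K).r (permFun K t (permInvFun K t p)) p
      refine ⟨0, 1, by simp [permInvFun, permFun]; omega, ?_⟩
      show R (Δpow K 0 ++ (τla K (p.1 + 1) t :: (Dc K (τla K p.1 t) ++ p.2)))
        (Δpow K 1 ++ p.2)
      have e1 : Δpow K 0 ++ (τla K (p.1+1) t :: (Dc K (τla K p.1 t) ++ p.2))
          = (τla K (p.1+1) t :: Dc K (τla K p.1 t)) ++ p.2 := by
        simp [Δpow]
      have e2 : Δpow K 1 ++ p.2 = Δw K ++ p.2 := by simp [Δpow]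
      rw [e1, e2]
      refine R.appendRight _ ?_
      rw [τla_succ ht]
      exact tau_compl (τla_lt ht)

lemma gPerm_apply {K t : ℕ} (ht : t < K) (k : ℕ) (p : List ℕ) :
    gPerm K t ht ⟦(k, p)⟧ = ⟦(k, τla K k t :: p)⟧ := rfl

/-! ### the action of the braid group on `X` -/

lemma gPerm_rels {n : ℕ} :
    ∀ r ∈ braidRels n,
      FreeGroup.lift (fun i : Fin (n-1) => gPerm (n-1) i.1 i.isLt) r = 1 := by
  intro r hr
  rcases hr with ⟨a, b, hab, rfl⟩ | ⟨a, b, hab, rfl⟩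
  · simp only [map_mul, map_inv, FreeGroup.lift_apply_of]
    have hcomm : gPerm (n-1) a.1 a.isLt * gPerm (n-1) b.1 b.isLt
        = gPerm (n-1) b.1 b.isLt * gPerm (n-1) a.1 a.isLt := by
      ext x
      induction x using Quotient.inductionOn with
      | _ p =>
        show (gPerm (n-1) a.1 a.isLt) ((gPerm (n-1) b.1 b.isLt) ⟦(p.1, p.2)⟧)
          = (gPerm (n-1) b.1 b.isLt) ((gPerm (n-1) a.1 a.isLt) ⟦(p.1, p.2)⟧)
        rw [gPerm_apply, gPerm_apply, gPerm_apply, gPerm_apply]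
        refine Quotient.sound ⟨0, 0, rfl, ?_⟩
        exact R.consList (Δpow (n-1) 0)
          (R.commF (τla_far (by omega) b.isLt) [] p.2)
    rw [hcomm]
    group
  · simp only [map_mul, map_inv, FreeGroup.lift_apply_of]
    have hbr : gPerm (n-1) a.1 a.isLt * gPerm (n-1) b.1 b.isLt * gPerm (n-1) a.1 a.isLt
        = gPerm (n-1) b.1 b.isLt * gPerm (n-1) a.1 a.isLt * gPerm (n-1) b.1 b.isLt := by
      ext x
      induction x using Quotient.inductionOn with
      | _ p =>
        show (gPerm (n-1) a.1 a.isLt) ((gPerm (n-1) b.1 b.isLt)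
            ((gPerm (n-1) a.1 a.isLt) ⟦(p.1, p.2)⟧))
          = (gPerm (n-1) b.1 b.isLt) ((gPerm (n-1) a.1 a.isLt)
            ((gPerm (n-1) b.1 b.isLt) ⟦(p.1, p.2)⟧))
        rw [gPerm_apply, gPerm_apply, gPerm_apply, gPerm_apply, gPerm_apply, gPerm_apply]
        refine Quotient.sound ⟨0, 0, rfl, ?_⟩
        exact R.consList (Δpow (n-1) 0)
          (R.braidF (τla_adj hab.symm b.isLt) [] p.2)
    rw [hbr]
    group

/-- the homomorphism from the braid group to permutations of `X` -/
noncomputable def ρ (n : ℕ) : BraidGroup n →* Equiv.Perm (X (n-1)) :=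
  PresentedGroup.toGroup gPerm_rels

lemma ρ_of {n : ℕ} (k : Fin (n-1)) : ρ n (σ k) = gPerm (n-1) k.1 k.isLt :=
  PresentedGroup.toGroup.of gPerm_rels

lemma ρ_eval {n : ℕ} : ∀ (w u : List ℕ), Bounded (n-1) w →
    (ρ n (wprod n w)) ⟦(0, u)⟧ = ⟦(0, w ++ u)⟧ := by
  intro w
  induction w with
  | nil => intro u _; simp [wprod_nil]; rfl
  | cons t w' ih =>
    intro u hb
    have ht : t < n - 1 := hb t (by simp)
    rw [wprod_cons, map_mul]
    show (ρ n (gen n t)) ((ρ n (wprod n w')) ⟦(0, u)⟧) = _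
    rw [ih u (fun x hx => hb x (by simp [hx]))]
    rw [gen, dif_pos ht, ρ_of, gPerm_apply]
    have : τla (n-1) 0 t = t := τla_zero
    rw [this]
    rfl

/-- the positive monoid embeds in the braid group -/
theorem group_to_R {n : ℕ} {u v : List ℕ} (hu : Bounded (n-1) u) (hv : Bounded (n-1) v)
    (h : wprod n u = wprod n v) : R u v := by
  have h1 : (ρ n (wprod n u)) ⟦(0, [])⟧ = (ρ n (wprod n v)) ⟦(0, [])⟧ := by rw [h]
  rw [ρ_eval u [] hu, ρ_eval v [] hv] at h1
  obtain ⟨a, b, hab, hR⟩ := Quotient.exact h1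
  simp only at hab hR
  have hab' : a = b := by omega
  subst hab'
  simpa using R.cancel_left (by simpa using hR)

/-! ### normal forms in the braid group -/

lemma bounded_append {K : ℕ} {u v : List ℕ} (hu : Bounded K u) (hv : Bounded K v) :
    Bounded K (u ++ v) := by
  intro x hx
  rcases List.mem_append.mp hx with h | h
  · exact hu x h
  · exact hv x h

/-- the image of Δ in the braid group -/
noncomputable def δg (m : ℕ) : BraidGroup m := wprod m (Δw (m-1))

lemma wprod_delta_pow {m : ℕ} (r : ℕ) : wprod m (Δpow (m-1) r) = (δg m) ^ r := by
  induction r with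
  | zero => simp [Δpow, wprod_nil]
  | succ r ih =>
    rw [Δpow, wprod_append, ih]
    show δg m * δg m ^ r = δg m ^ (r + 1)
    rw [← pow_succ']

lemma wprod_conj {m : ℕ} {P : List ℕ} (hP : Bounded (m-1) P) (l : ℕ) :
    wprod m P * (δg m) ^ l = (δg m) ^ l * wprod m (τpow (m-1) l P) := by
  have h := delta_pow_conj l hP
  have h2 := h.to_group0 (n := m) (bounded_append hP delta_pow_bounded)
    (bounded_append delta_pow_bounded (τpow_bounded hP))
  rw [wprod_append, wprod_append, wprod_delta_pow] at h2
  exact h2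

lemma wprod_conj_inv {m : ℕ} {P : List ℕ} (hP : Bounded (m-1) P) (l : ℕ) :
    wprod m P * ((δg m) ^ l)⁻¹ = ((δg m) ^ l)⁻¹ * wprod m (τpow (m-1) l P) := by
  have h := wprod_conj (τpow_bounded hP (a := l)) l
  rw [τpow_τpow hP] at h
  calc wprod m P * ((δg m)^l)⁻¹
      = ((δg m)^l)⁻¹ * (wprod m (τpow (m-1) l P) * (δg m)^l) * ((δg m)^l)⁻¹ := by
        rw [h]; group
    _ = ((δg m)^l)⁻¹ * wprod m (τpow (m-1) l P) := by group

lemma delta_factor {m t : ℕ} (ht : t < m - 1) :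
    δg m = wprod m (Dc (m-1) t) * gen m t := by
  have h := (Dc_spec ht).to_group0 (n := m) delta_bounded
    (bounded_append (Dc_bounded ht) (fun x hx => by simp at hx; omega))
  rw [wprod_append] at h
  have : wprod m [t] = gen m t := by simp [wprod]
  rw [this] at h
  exact h

lemma pos_complement {m : ℕ} : ∀ {P : List ℕ}, Bounded (m-1) P →
    ∃ Q, Bounded (m-1) Q ∧ wprod m P * wprod m Q = (δg m) ^ P.length := by
  intro P
  induction P with
  | nil => exact fun _ => ⟨[], fun x hx => by simp at hx, by simp [wprod_nil]⟩
  | cons t P' ih =>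
    intro hP
    have ht : t < m - 1 := hP t (by simp)
    obtain ⟨Q', hQ', hQeq⟩ := ih (fun x hx => hP x (by simp [hx]))
    set l := P'.length + 1 with hl
    refine ⟨Q' ++ τpow (m-1) l (Dc (m-1) t),
      bounded_append hQ' (τpow_bounded (Dc_bounded ht)), ?_⟩
    have hconj : wprod m (Dc (m-1) t) * (δg m) ^ l
        = (δg m) ^ l * wprod m (τpow (m-1) l (Dc (m-1) t)) :=
      wprod_conj (Dc_bounded ht) l
    have hlen : (t :: P').length = l := by simp [hl]
    rw [hlen, wprod_cons, wprod_append, ← mul_assoc]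
    have e1 : gen m t * wprod m P' * wprod m Q' = gen m t * (δg m) ^ P'.length := by
      rw [mul_assoc, hQeq]
    rw [e1]
    -- goal : gen m t * δ^{l-1} * wprod (τpow l Dc) = δ^l
    have e2 : wprod m (τpow (m-1) l (Dc (m-1) t))
        = ((δg m) ^ l)⁻¹ * (wprod m (Dc (m-1) t) * (δg m) ^ l) := by
      rw [hconj, inv_mul_cancel_left]
    have e4 : (δg m) ^ P'.length * ((δg m) ^ l)⁻¹ = (δg m)⁻¹ := by
      rw [hl, pow_succ]; group
    have e5 : gen m t * (δg m)⁻¹ * wprod m (Dc (m-1) t) = 1 := by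
      rw [delta_factor ht]; group
    calc gen m t * (δg m) ^ P'.length * wprod m (τpow (m-1) l (Dc (m-1) t))
        = gen m t * (δg m) ^ P'.length * (((δg m) ^ l)⁻¹ * (wprod m (Dc (m-1) t) * (δg m) ^ l)) := by
          rw [e2]
      _ = gen m t * ((δg m) ^ P'.length * ((δg m) ^ l)⁻¹) * wprod m (Dc (m-1) t) * (δg m) ^ l := by
          group
      _ = (gen m t * (δg m)⁻¹ * wprod m (Dc (m-1) t)) * (δg m) ^ l := by
          rw [e4]
      _ = (δg m) ^ l := by rw [e5, one_mul]

/-- every element of the braid group is a fraction `Δ⁻ᵏ · positive` -/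
lemma braid_normal_form {m : ℕ} (x : BraidGroup m) :
    ∃ (k : ℕ) (P : List ℕ), Bounded (m-1) P ∧ x = ((δg m) ^ k)⁻¹ * wprod m P := by
  set H : Subgroup (BraidGroup m) :=
    { carrier := {x | ∃ (k : ℕ) (P : List ℕ), Bounded (m-1) P ∧ x = ((δg m) ^ k)⁻¹ * wprod m P}
      one_mem' := ⟨0, [], fun x hx => by simp at hx, by simp [wprod_nil]⟩
      mul_mem' := by
        rintro x y ⟨k, P, hP, rfl⟩ ⟨l, Q, hQ, rfl⟩
        refine ⟨k + l, τpow (m-1) l P ++ Q,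
          bounded_append (τpow_bounded hP) hQ, ?_⟩
        rw [wprod_append]
        have h1 : wprod m P * ((δg m) ^ l)⁻¹
            = ((δg m) ^ l)⁻¹ * wprod m (τpow (m-1) l P) := wprod_conj_inv hP l
        calc ((δg m)^k)⁻¹ * wprod m P * (((δg m)^l)⁻¹ * wprod m Q)
            = ((δg m)^k)⁻¹ * (wprod m P * ((δg m)^l)⁻¹) * wprod m Q := by group
          _ = ((δg m)^k)⁻¹ * (((δg m)^l)⁻¹ * wprod m (τpow (m-1) l P)) * wprod m Q := by
              rw [h1]
          _ = ((δg m)^(k+l))⁻¹ * (wprod m (τpow (m-1) l P) * wprod m Q) := by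
              rw [pow_add]; group
      inv_mem' := by
        rintro x ⟨k, P, hP, rfl⟩
        obtain ⟨Q, hQ, hQeq⟩ := pos_complement hP
        have hxinv : (((δg m)^k)⁻¹ * wprod m P)⁻¹ = wprod m Q * ((δg m) ^ P.length)⁻¹ * (δg m)^k := by
          rw [mul_inv_rev, inv_inv]
          have : (wprod m P)⁻¹ = wprod m Q * ((δg m) ^ P.length)⁻¹ := by
            rw [← hQeq]; group
          rw [this]
        by_cases hk : P.length ≤ k
        · refine ⟨0, Q ++ Δpow (m-1) (k - P.length),
            bounded_append hQ delta_pow_bounded, ?_⟩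
          rw [hxinv, wprod_append, wprod_delta_pow]
          have : (δg m)^k = (δg m)^(P.length) * (δg m)^(k - P.length) := by
            rw [← pow_add]; congr 1; omega
          rw [this]
          group
        · refine ⟨P.length - k, τpow (m-1) (P.length - k) Q, τpow_bounded hQ, ?_⟩
          have h1 : wprod m Q * ((δg m) ^ (P.length - k))⁻¹
              = ((δg m) ^ (P.length - k))⁻¹ * wprod m (τpow (m-1) (P.length - k) Q) :=
            wprod_conj_inv hQ _
          have e1 : ((δg m) ^ P.length)⁻¹ * (δg m)^k = ((δg m) ^ (P.length - k))⁻¹ := by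
            have : (δg m)^(P.length) = (δg m)^(P.length - k) * (δg m)^k := by
              rw [← pow_add]; congr 1; omega
            rw [this]; group
          rw [hxinv, mul_assoc, e1, h1] }
  have : ∀ x : BraidGroup m, x ∈ H := by
    intro x
    refine PresentedGroup.generated_by (braidRels m) H ?_ x
    intro j
    refine ⟨0, [j.1], fun x hx => by simp at hx; omega, ?_⟩
    have : wprod m [j.1] = gen m j.1 := by simp [wprod]
    rw [this, gen, dif_pos j.isLt]
    simp [σ, Fin.eta]
    exact (one_mul _).symm
  exact this x

end BraidProof

open BraidProof in
/-- For `1 ≤ i ≤ j < n`, the subgroup of `B_n` generated by `σᵢ, σ_{i+1}, …, σⱼ`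
(1-indexed) is isomorphic to the braid group `B_{j-i+2}`. -/
theorem parabolic_subgroup_iso_braidGroup (n i j : ℕ) (hi : 1 ≤ i) (hij : i ≤ j) (hj : j < n) :
    Nonempty ((Subgroup.closure
        {x : BraidGroup n | ∃ k : Fin (n - 1), i ≤ (k : ℕ) + 1 ∧ (k : ℕ) + 1 ≤ j ∧ x = σ k})
      ≃* BraidGroup (j - i + 2)) := by
  set S : Set (BraidGroup n) :=
    {x : BraidGroup n | ∃ k : Fin (n - 1), i ≤ (k : ℕ) + 1 ∧ (k : ℕ) + 1 ≤ j ∧ x = σ k} with hS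
  set m : ℕ := j - i + 2 with hm
  have hm1 : m - 1 = j - i + 1 := rfl
  have hsn : ∀ t : Fin (m-1), (t : ℕ) + (i-1) < n - 1 := by
    intro t
    have h := t.isLt
    omega
  set f : Fin (m-1) → BraidGroup n := (fun t => σ ⟨t.1 + (i-1), hsn t⟩) with hf
  have hrels : ∀ r ∈ braidRels m, FreeGroup.lift f r = 1 := by
    intro r hr
    rcases hr with ⟨a, b, hab, rfl⟩ | ⟨a, b, hab, rfl⟩
    · simp only [map_mul, map_inv, FreeGroup.lift_apply_of]
      have hc : f a * f b = f b * f a := by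
        rw [hf]
        refine braid_comm ?_
        simp only [Fin.val_mk]
        omega
      rw [hc]
      group
    · simp only [map_mul, map_inv, FreeGroup.lift_apply_of]
      have hc : f a * f b * f a = f b * f a * f b := by
        rw [hf]
        refine braid_braid ?_
        simp only [Fin.val_mk]
        omega
      rw [hc]
      group
  set Φ : BraidGroup m →* BraidGroup n := PresentedGroup.toGroup hrels with hΦ
  have Φof : ∀ t : Fin (m-1), Φ (σ t) = σ ⟨t.1 + (i-1), hsn t⟩ := by
    intro t
    rw [hΦ]
    exact PresentedGroup.toGroup.of hrels
  have hΦw : ∀ w : List ℕ, Bounded (m-1) w → Φ (wprod m w) = wprod n (w.map (· + (i-1))) := by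
    intro w
    induction w with
    | nil => intro _; simp [wprod_nil]
    | cons t w' ih =>
      intro hb
      have ht : t < m - 1 := hb t (by simp)
      have htn : t + (i-1) < n - 1 := hsn ⟨t, ht⟩
      rw [wprod_cons, map_mul, ih (fun x hx => hb x (by simp [hx])), List.map_cons, wprod_cons]
      congr 1
      rw [gen, dif_pos ht, Φof ⟨t, ht⟩, gen, dif_pos htn]
  have hker : ∀ z : BraidGroup m, Φ z = 1 → z = 1 := by
    intro z hz
    obtain ⟨k, P, hP, rfl⟩ := braid_normal_form z
    have hδk : Φ ((δg m)^k) = wprod n ((Δpow (m-1) k).map (· + (i-1))) := by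
      rw [← wprod_delta_pow]
      exact hΦw _ delta_pow_bounded
    have hz' : wprod n ((Δpow (m-1) k).map (· + (i-1))) = wprod n (P.map (· + (i-1))) := by
      rw [map_mul, map_inv, hδk, hΦw P hP] at hz
      exact inv_mul_eq_one.mp hz
    have hbA : Bounded (n-1) ((Δpow (m-1) k).map (· + (i-1))) := by
      intro x hx
      simp only [List.mem_map] at hx
      obtain ⟨y, hy, rfl⟩ := hx
      exact hsn ⟨y, delta_pow_bounded y hy⟩
    have hbB : Bounded (n-1) (P.map (· + (i-1))) := by
      intro x hx
      simp only [List.mem_map] at hx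
      obtain ⟨y, hy, rfl⟩ := hx
      exact hsn ⟨y, hP y hy⟩
    have hR := group_to_R hbA hbB hz'
    have hwin : ∀ (w : List ℕ), Bounded (m-1) w →
        ∀ x ∈ w.map (· + (i-1)), i - 1 ≤ x ∧ x - (i-1) < m - 1 := by
      intro w hw x hx
      simp only [List.mem_map] at hx
      obtain ⟨y, hy, rfl⟩ := hx
      have := hw y hy
      omega
    have h2 := hR.to_group (n := m) (s := i - 1)
      (hwin _ delta_pow_bounded) (hwin _ hP)
    have hcomp : ∀ (w : List ℕ), (w.map (· + (i-1))).map (· - (i-1)) = w := by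
      intro w
      rw [List.map_map]
      conv_rhs => rw [← List.map_id w]
      refine List.map_congr_left fun x _ => ?_
      simp
    rw [hcomp, hcomp, wprod_delta_pow] at h2
    rw [← h2]
    group
  have hinj : Function.Injective Φ := by
    intro x y hxy
    have h1 : Φ (x * y⁻¹) = 1 := by
      rw [map_mul, map_inv, hxy]
      group
    have := hker _ h1
    have h2 : x * y⁻¹ = 1 := this
    calc x = (x * y⁻¹) * y := by group
      _ = 1 * y := by rw [h2]
      _ = y := one_mul y
  have hrange : Φ.range = Subgroup.closure S := by
    apply le_antisymm
    · rintro x ⟨z, rfl⟩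
      show z ∈ Subgroup.comap Φ (Subgroup.closure S)
      refine PresentedGroup.generated_by (braidRels m) _ ?_ z
      intro t
      refine Subgroup.subset_closure ?_
      show Φ (σ t) ∈ S
      rw [Φof t]
      refine ⟨⟨t.1 + (i-1), hsn t⟩, ?_, ?_, rfl⟩
      · simp only [Fin.val_mk]; omega
      · have ht := t.isLt; simp only [Fin.val_mk]; omega
    · rw [Subgroup.closure_le]
      rintro x ⟨k, h1, h2, rfl⟩
      have hk : k.1 - (i-1) < m - 1 := by have := k.isLt; omega
      refine ⟨PresentedGroup.of ⟨k.1 - (i-1), hk⟩, ?_⟩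
      have := Φof ⟨k.1 - (i-1), hk⟩
      rw [show (PresentedGroup.of (rels := braidRels m) ⟨k.1 - (i-1), hk⟩) = σ ⟨k.1 - (i-1), hk⟩ from rfl, this]
      congr 1
      refine Fin.ext ?_
      simp only [Fin.val_mk]
      omega
  exact ⟨((MonoidHom.ofInjective hinj).trans (MulEquiv.subgroupCongr hrange)).symm⟩
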